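/- arXiv:1906.10800 — 4 statements merged into one kernel-verified Lean document; each statement's English description precedes it below -/
import Mathlib

section
/- Let A and B be n×n complex matrices such that I + B is invertible. Then |det(I + A)| ≤ |det(I + B)| · exp(‖(A − B)(I + B)^{-1}‖₁), where ‖M‖₁ denotes the trace norm of M. -/
open scoped ComplexOrder
open scoped Matrix

-- Cauchy–Schwarz for complex vectors
private lemma cs_aux {n : ℕ} (x y : Fin n → ℂ) :
    ‖∑ j, (starRingEnd ℂ) (x j) * y j‖ ≤
      Real.sqrt (∑ j, ‖x j‖ ^ 2) * Real.sqrt (∑ j, ‖y j‖ ^ 2) := by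
  have h := norm_inner_le_norm (𝕜 := ℂ) (WithLp.toLp 2 x) (WithLp.toLp 2 y)
  rw [EuclideanSpace.inner_toLp_toLp, dotProduct_comm] at h
  simpa [EuclideanSpace.norm_eq, dotProduct, Pi.star_apply] using h

-- column square-sum from a Gram entry
private lemma col_sq_sum {n : ℕ} (Y : Matrix (Fin n) (Fin n) ℂ) (i : Fin n) (c : ℝ)
    (h : (Yᴴ * Y) i i = (c : ℂ)) : ∑ j, ‖Y j i‖ ^ 2 = c := by
  have h2 : (Yᴴ * Y) i i = ((∑ j, ‖Y j i‖ ^ 2 : ℝ) : ℂ) := by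
    rw [Matrix.mul_apply]
    push_cast
    refine Finset.sum_congr rfl fun j _ => ?_
    rw [Matrix.conjTranspose_apply, Complex.star_def, mul_comm, Complex.mul_conj,
      Complex.normSq_eq_norm_sq]
    push_cast
    ring
  rw [h] at h2
  exact_mod_cast h2.symm

/-- The trace norm of a square complex matrix: the trace of the positive semidefinite
square root of `Mᴴ * M`. -/
noncomputable def Matrix.traceNorm {n : ℕ} (M : Matrix (Fin n) (Fin n) ℂ) : ℝ :=
  (((Matrix.posSemidef_conjTranspose_mul_self M).1.eigenvectorUnitary.1 *
    Matrix.diagonal (((↑) : ℝ → ℂ) ∘ Real.sqrt ∘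
      (Matrix.posSemidef_conjTranspose_mul_self M).1.eigenvalues) *
    (star (Matrix.posSemidef_conjTranspose_mul_self M).1.eigenvectorUnitary :
      Matrix (Fin n) (Fin n) ℂ)).trace).re

noncomputable def Matrix.PosSemidef.sqrt {n : ℕ} {H : Matrix (Fin n) (Fin n) ℂ}
    (hH : H.PosSemidef) : Matrix (Fin n) (Fin n) ℂ :=
  hH.1.eigenvectorUnitary.1 * Matrix.diagonal (((↑) : ℝ → ℂ) ∘ Real.sqrt ∘ hH.1.eigenvalues) *
    (star hH.1.eigenvectorUnitary : Matrix (Fin n) (Fin n) ℂ)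

lemma Matrix.PosSemidef.posSemidef_sqrt {n : ℕ} {H : Matrix (Fin n) (Fin n) ℂ}
    (hH : H.PosSemidef) : hH.sqrt.PosSemidef := by
  have hD : (Matrix.diagonal (((↑) : ℝ → ℂ) ∘ Real.sqrt ∘ hH.1.eigenvalues)).PosSemidef := by
    rw [Matrix.posSemidef_diagonal_iff]
    intro i
    simp only [Function.comp_apply]
    exact Complex.zero_le_real.mpr (Real.sqrt_nonneg _)
  have := hD.mul_mul_conjTranspose_same (hH.1.eigenvectorUnitary.1)
  rwa [← Matrix.star_eq_conjTranspose] at this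

lemma Matrix.PosSemidef.sqrt_mul_self {n : ℕ} {H : Matrix (Fin n) (Fin n) ℂ}
    (hH : H.PosSemidef) : hH.sqrt * hH.sqrt = H := by
  have hUU : (star hH.1.eigenvectorUnitary : Matrix (Fin n) (Fin n) ℂ) *
      hH.1.eigenvectorUnitary.1 = 1 := (Unitary.mem_iff.mp hH.1.eigenvectorUnitary.2).1
  have hdd : Matrix.diagonal (((↑) : ℝ → ℂ) ∘ Real.sqrt ∘ hH.1.eigenvalues) *
      Matrix.diagonal (((↑) : ℝ → ℂ) ∘ Real.sqrt ∘ hH.1.eigenvalues) =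
      Matrix.diagonal (RCLike.ofReal ∘ hH.1.eigenvalues) := by
    rw [Matrix.diagonal_mul_diagonal]
    congr 1
    funext i
    simp only [Function.comp_apply]
    rw [← Complex.ofReal_mul, Real.mul_self_sqrt (hH.eigenvalues_nonneg i)]
    rfl
  have hspec := hH.1.spectral_theorem
  rw [Unitary.conjStarAlgAut_apply] at hspec
  unfold Matrix.PosSemidef.sqrt
  calc _ = hH.1.eigenvectorUnitary.1 *
        (Matrix.diagonal (((↑) : ℝ → ℂ) ∘ Real.sqrt ∘ hH.1.eigenvalues) *
        ((star hH.1.eigenvectorUnitary : Matrix (Fin n) (Fin n) ℂ) *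
        hH.1.eigenvectorUnitary.1) *
        Matrix.diagonal (((↑) : ℝ → ℂ) ∘ Real.sqrt ∘ hH.1.eigenvalues)) *
        (star hH.1.eigenvectorUnitary : Matrix (Fin n) (Fin n) ℂ) := by
          simp only [mul_assoc]
    _ = H := by rw [hUU, mul_one, hdd, ← hspec]

-- trace of a psd matrix equals the sum of its eigenvalues
private lemma trace_eq_sum_eig {n : ℕ} {P : Matrix (Fin n) (Fin n) ℂ} (hP : P.PosSemidef) :
    P.trace = ((∑ i, hP.1.eigenvalues i : ℝ) : ℂ) := by
  have hdiag := hP.1.conjStarAlgAut_star_eigenvectorUnitary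
  rw [Unitary.conjStarAlgAut_star_apply] at hdiag
  have h1 : (star (hP.1.eigenvectorUnitary : Matrix (Fin n) (Fin n) ℂ) * P *
      (hP.1.eigenvectorUnitary : Matrix (Fin n) (Fin n) ℂ)).trace = P.trace := by
    rw [Matrix.trace_mul_cycle,
      (Unitary.mem_iff.mp hP.1.eigenvectorUnitary.2).2, one_mul]
  rw [hdiag] at h1
  rw [← h1, Matrix.trace_diagonal]
  push_cast
  rfl

private lemma abs_trace_unitary_mul_le {n : ℕ} (V A : Matrix (Fin n) (Fin n) ℂ)
    (hV : V ∈ Matrix.unitaryGroup (Fin n) ℂ) :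
    ‖(V * A).trace‖ ≤ A.traceNorm := by
  classical
  have hsq := Matrix.posSemidef_conjTranspose_mul_self A
  set P := hsq.sqrt with hPdef
  have hP : P.PosSemidef := hsq.posSemidef_sqrt
  set U : Matrix (Fin n) (Fin n) ℂ := (hP.1.eigenvectorUnitary : Matrix (Fin n) (Fin n) ℂ) with hUdef
  set μ : Fin n → ℝ := hP.1.eigenvalues with hμdef
  have hUU : U * star U = 1 := (Unitary.mem_iff.mp hP.1.eigenvectorUnitary.2).2
  have hUU' : star U * U = 1 := (Unitary.mem_iff.mp hP.1.eigenvectorUnitary.2).1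
  have hVV : V * star V = 1 := (Unitary.mem_iff.mp hV).2
  have hdiag : star U * P * U = Matrix.diagonal (RCLike.ofReal ∘ μ) := by
    have := hP.1.conjStarAlgAut_star_eigenvectorUnitary
    rwa [Unitary.conjStarAlgAut_star_apply] at this
  set X := star V * U with hXdef
  set Y := A * U with hYdef
  have h1 : (V * A).trace = (Xᴴ * Y).trace := by
    have hXY : Xᴴ * Y = star U * (V * A) * U := by
      simp [hXdef, hYdef, Matrix.star_eq_conjTranspose, Matrix.conjTranspose_mul, mul_assoc]
    rw [hXY, Matrix.trace_mul_cycle, ← mul_assoc, hUU, one_mul]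
  have hXX : Xᴴ * X = 1 := by
    have : Xᴴ * X = star U * (V * star V) * U := by
      simp [hXdef, Matrix.star_eq_conjTranspose, Matrix.conjTranspose_mul, mul_assoc]
    rw [this, hVV, mul_one, hUU']
  have hXcol : ∀ i, ∑ j, ‖X j i‖ ^ 2 = 1 := fun i =>
    col_sq_sum X i 1 (by rw [hXX, Matrix.one_apply_eq]; norm_num)
  have hYY : Yᴴ * Y = Matrix.diagonal (RCLike.ofReal ∘ μ) * Matrix.diagonal (RCLike.ofReal ∘ μ) := by
    have e1 : Yᴴ * Y = star U * (Aᴴ * A) * U := by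
      simp [hYdef, Matrix.star_eq_conjTranspose, Matrix.conjTranspose_mul, mul_assoc]
    have e2 : star U * (Aᴴ * A) * U = (star U * P * U) * (star U * P * U) := by
      rw [← hsq.sqrt_mul_self, ← hPdef]
      conv_lhs => rw [show P * P = P * (U * star U) * P by rw [hUU, mul_one]]
      simp only [mul_assoc]
    rw [e1, e2, hdiag]
  have hYcol : ∀ i, ∑ j, ‖Y j i‖ ^ 2 = μ i ^ 2 := fun i =>
    col_sq_sum Y i (μ i ^ 2) (by
      rw [hYY, Matrix.diagonal_mul_diagonal, Matrix.diagonal_apply_eq]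
      simp only [Function.comp_apply]
      norm_cast
      exact congrArg _ (sq (μ i)).symm)
  have htn : A.traceNorm = ∑ i, μ i := by
    have ht := trace_eq_sum_eig hP
    show (P.trace).re = ∑ i, μ i
    rw [ht, Complex.ofReal_re]
  have h2 : (Xᴴ * Y).trace = ∑ i, ∑ j, (starRingEnd ℂ) (X j i) * Y j i := by
    rw [Matrix.trace]
    simp [Matrix.diag, Matrix.mul_apply, Matrix.conjTranspose_apply, Complex.star_def]
  calc ‖(V * A).trace‖
      = ‖∑ i, ∑ j, (starRingEnd ℂ) (X j i) * Y j i‖ := by rw [h1, h2]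
    _ ≤ ∑ i, ‖∑ j, (starRingEnd ℂ) (X j i) * Y j i‖ := norm_sum_le _ _
    _ ≤ ∑ i, Real.sqrt (∑ j, ‖X j i‖ ^ 2) * Real.sqrt (∑ j, ‖Y j i‖ ^ 2) :=
        Finset.sum_le_sum fun i _ => cs_aux (fun j => X j i) (fun j => Y j i)
    _ = ∑ i, μ i := by
        refine Finset.sum_congr rfl fun i _ => ?_
        rw [hXcol i, hYcol i, Real.sqrt_one, one_mul, Real.sqrt_sq (hP.eigenvalues_nonneg i)]
    _ = A.traceNorm := htn.symm

private lemma abs_det_one_add_le_exp_traceNorm {n : ℕ} (C : Matrix (Fin n) (Fin n) ℂ) :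
    ‖(1 + C).det‖ ≤ Real.exp C.traceNorm := by
  classical
  set M : Matrix (Fin n) (Fin n) ℂ := 1 + C with hMdef
  by_cases hdet : M.det = 0
  · rw [hdet]
    simpa using (Real.exp_pos C.traceNorm).le
  · have hsq := Matrix.posSemidef_conjTranspose_mul_self M
    set P := hsq.sqrt with hPdef
    have hP : P.PosSemidef := hsq.posSemidef_sqrt
    set μ : Fin n → ℝ := hP.1.eigenvalues with hμdef
    have hμ0 : ∀ i, 0 ≤ μ i := hP.eigenvalues_nonneg
    have hPP : P * P = Mᴴ * M := hsq.sqrt_mul_self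
    have hdetP : P.det = ((∏ i, μ i : ℝ) : ℂ) := by
      rw [hP.1.det_eq_prod_eigenvalues]
      push_cast
      rfl
    have habs : ‖M.det‖ = ∏ i, μ i := by
      have h1 : (Mᴴ * M).det = (((∏ i, μ i) ^ 2 : ℝ) : ℂ) := by
        rw [← hPP, Matrix.det_mul, hdetP]
        push_cast
        ring
      have h2 : (Mᴴ * M).det = (((‖M.det‖) ^ 2 : ℝ) : ℂ) := by
        rw [Matrix.det_mul, Matrix.det_conjTranspose, Complex.star_def, mul_comm,
          Complex.mul_conj, Complex.normSq_eq_norm_sq]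
      have h3 : (‖M.det‖) ^ 2 = (∏ i, μ i) ^ 2 := by
        have := h2.symm.trans h1
        exact_mod_cast this
      have h4 : 0 ≤ ∏ i, μ i := Finset.prod_nonneg fun i _ => hμ0 i
      nlinarith [norm_nonneg M.det]
    have hPdet : IsUnit P.det := by
      rw [isUnit_iff_ne_zero, hdetP]
      simp only [ne_eq, Complex.ofReal_eq_zero]
      intro h
      exact hdet (norm_eq_zero.mp (by rw [habs, h]))
    set W := P⁻¹ * Mᴴ with hWdef
    have hstarW : star W = M * P⁻¹ := by
      rw [hWdef, Matrix.star_eq_conjTranspose, Matrix.conjTranspose_mul,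
        Matrix.conjTranspose_conjTranspose, Matrix.conjTranspose_nonsing_inv, hP.1.eq]
    have hWmem : W ∈ Matrix.unitaryGroup (Fin n) ℂ := by
      rw [Matrix.mem_unitaryGroup_iff]
      rw [hstarW, hWdef]
      calc P⁻¹ * Mᴴ * (M * P⁻¹) = P⁻¹ * ((Mᴴ * M) * P⁻¹) := by simp only [mul_assoc]
        _ = P⁻¹ * ((P * P) * P⁻¹) := by rw [hPP]
        _ = 1 := by
            rw [mul_assoc P P P⁻¹, Matrix.mul_nonsing_inv _ hPdet, mul_one,
              Matrix.nonsing_inv_mul _ hPdet]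
    have htr : (W * M).trace = P.trace := by
      have e : W * M = P⁻¹ * (Mᴴ * M) := by rw [hWdef, mul_assoc]
      rw [e, ← hPP, ← mul_assoc, Matrix.nonsing_inv_mul _ hPdet, one_mul]
    have hPtr : P.trace = ((∑ i, μ i : ℝ) : ℂ) := trace_eq_sum_eig hP
    have hWcol : ∀ i, ∑ j, ‖W j i‖ ^ 2 = 1 := fun i => by
      refine col_sq_sum W i 1 ?_
      have : Wᴴ * W = 1 := by
        rw [← Matrix.star_eq_conjTranspose]
        exact (Unitary.mem_iff.mp hWmem).1
      rw [this, Matrix.one_apply_eq]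
      norm_num
    have hWii : ∀ i, ‖W i i‖ ≤ 1 := fun i => by
      have h1 : ‖W i i‖ ^ 2 ≤ 1 := by
        rw [← hWcol i]
        exact Finset.single_le_sum (f := fun j => ‖W j i‖ ^ 2)
          (fun j _ => sq_nonneg _) (Finset.mem_univ i)
      nlinarith [norm_nonneg (W i i)]
    have htrW : ‖W.trace‖ ≤ n := by
      calc ‖W.trace‖ ≤ ∑ i, ‖W i i‖ := norm_sum_le _ _
        _ ≤ ∑ _i : Fin n, (1 : ℝ) := Finset.sum_le_sum fun i _ => hWii i
        _ = n := by simp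
    have hsum : ∑ i, μ i ≤ n + C.traceNorm := by
      have hWM : (W * M).trace = W.trace + (W * C).trace := by
        rw [hMdef, mul_add, mul_one, Matrix.trace_add]
      have hre : (∑ i, μ i : ℝ) = W.trace.re + (W * C).trace.re := by
        have := (hWM.symm.trans htr).trans hPtr
        have := congrArg Complex.re this.symm
        simpa [Complex.add_re] using this
      have b1 : W.trace.re ≤ (n : ℝ) := le_trans (Complex.re_le_norm _) htrW
      have b2 : (W * C).trace.re ≤ C.traceNorm :=
        le_trans (Complex.re_le_norm _) (abs_trace_unitary_mul_le W C hWmem)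
      linarith
    calc ‖M.det‖ = ∏ i, μ i := habs
      _ ≤ ∏ i, Real.exp (μ i - 1) := Finset.prod_le_prod (fun i _ => hμ0 i)
          (fun i _ => by have := Real.add_one_le_exp (μ i - 1); linarith)
      _ = Real.exp (∑ i, (μ i - 1)) := (Real.exp_sum _ _).symm
      _ ≤ Real.exp C.traceNorm := by
          rw [Real.exp_le_exp]
          have e : ∑ i, (μ i - 1) = (∑ i, μ i) - n := by
            rw [Finset.sum_sub_distrib]
            simp
          rw [e]
          linarith

/-- If `I + B` is invertible, then
`|det (I + A)| ≤ |det (I + B)| · exp ‖(A - B) (I + B)⁻¹‖₁`,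
where `‖·‖₁` is the trace norm. -/
theorem abs_det_one_add_le {n : ℕ} (A B : Matrix (Fin n) (Fin n) ℂ)
    (hB : IsUnit (1 + B)) :
    ‖(1 + A).det‖ ≤
      ‖(1 + B).det‖ * Real.exp (((A - B) * (1 + B)⁻¹).traceNorm) := by
  have hBdet : IsUnit (1 + B).det := (Matrix.isUnit_iff_isUnit_det _).mp hB
  have hfac : (1 + (A - B) * (1 + B)⁻¹) * (1 + B) = 1 + A := by
    rw [add_mul, one_mul, mul_assoc, Matrix.nonsing_inv_mul _ hBdet, mul_one]
    abel
  calc ‖(1 + A).det‖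
      = ‖(1 + (A - B) * (1 + B)⁻¹).det‖ * ‖(1 + B).det‖ := by
        rw [← hfac, Matrix.det_mul, norm_mul]
    _ ≤ Real.exp (((A - B) * (1 + B)⁻¹).traceNorm) * ‖(1 + B).det‖ :=
        mul_le_mul_of_nonneg_right (abs_det_one_add_le_exp_traceNorm _)
          (norm_nonneg _)
    _ = ‖(1 + B).det‖ * Real.exp (((A - B) * (1 + B)⁻¹).traceNorm) := mul_comm _ _
end

section
/- Let A and B be n×n complex matrices such that I + B is invertible. Then |det(I + B)| ≥ |det(I + A)| · exp(−∑_{i,j} |((A − B)(I + B)^{-1})_{ij}|), where the sum runs over all entries of the matrix (A − B)(I + B)^{-1}. -/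
lemma abs_det_le_prod_sum {n : ℕ} (M : Matrix (Fin n) (Fin n) ℂ) :
    ‖M.det‖ ≤ ∏ j : Fin n, ∑ i : Fin n, ‖M i j‖ := by
  rw [Matrix.det_apply]
  calc ‖∑ σ : Equiv.Perm (Fin n), Equiv.Perm.sign σ • ∏ i, M (σ i) i‖
      ≤ ∑ σ : Equiv.Perm (Fin n), ‖Equiv.Perm.sign σ • ∏ i, M (σ i) i‖ :=
        norm_sum_le _ _
    _ = ∑ σ : Equiv.Perm (Fin n), ∏ i, ‖M (σ i) i‖ := by
        refine Finset.sum_congr rfl fun σ _ => ?_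
        rw [Units.smul_def, zsmul_eq_mul, norm_mul, norm_prod]
        rcases Int.units_eq_one_or (Equiv.Perm.sign σ) with h | h <;> simp [h]
    _ ≤ ∑ g : Fin n → Fin n, ∏ i, ‖M (g i) i‖ := by
        have himg : ∑ g ∈ Finset.univ.image (fun σ : Equiv.Perm (Fin n) => (σ : Fin n → Fin n)),
              ∏ i, ‖M (g i) i‖
            = ∑ σ : Equiv.Perm (Fin n), ∏ i, ‖M (σ i) i‖ :=
          Finset.sum_image (by
            intro σ _ τ _ h
            exact Equiv.coe_fn_injective h)
        rw [← himg]
        apply Finset.sum_le_sum_of_subset_of_nonneg (Finset.subset_univ _)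
        intro g _ _
        exact Finset.prod_nonneg fun i _ => norm_nonneg _
    _ = ∏ j : Fin n, ∑ i : Fin n, ‖M i j‖ := by
        rw [Fintype.prod_sum fun j i => ‖M i j‖]

/-- If `I + B` is invertible, then
`|det (I + B)| ≥ |det (I + A)| · exp (-∑_{i,j} |((A - B) (I + B)⁻¹)_{ij}|)`. -/
theorem abs_det_one_add_ge {n : ℕ} (A B : Matrix (Fin n) (Fin n) ℂ)
    (hB : IsUnit (1 + B)) :
    ‖(1 + A).det‖ *
        Real.exp (-(∑ i : Fin n, ∑ j : Fin n, ‖((A - B) * (1 + B)⁻¹) i j‖)) ≤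
      ‖(1 + B).det‖ := by
  set C := (A - B) * (1 + B)⁻¹ with hC
  have hdet : IsUnit (1 + B).det := (Matrix.isUnit_iff_isUnit_det _).mp hB
  have hinv : (1 + B)⁻¹ * (1 + B) = 1 := Matrix.nonsing_inv_mul _ hdet
  have hfac : (1 + C) * (1 + B) = 1 + A := by
    rw [add_mul, one_mul, hC, mul_assoc, hinv, mul_one]
    noncomm_ring
  have hdetfac : (1 + A).det = (1 + C).det * (1 + B).det := by
    rw [← hfac, Matrix.det_mul]
  -- bound |det (1 + C)| ≤ exp S
  set S : ℝ := ∑ i : Fin n, ∑ j : Fin n, ‖C i j‖ with hS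
  have key : ‖(1 + C).det‖ ≤ Real.exp S := by
    calc ‖(1 + C).det‖
        ≤ ∏ j : Fin n, ∑ i : Fin n, ‖(1 + C) i j‖ := abs_det_le_prod_sum _
      _ ≤ ∏ j : Fin n, Real.exp (∑ i : Fin n, ‖C i j‖) := by
          apply Finset.prod_le_prod
          · intro j _
            exact Finset.sum_nonneg fun i _ => norm_nonneg _
          · intro j _
            calc ∑ i : Fin n, ‖(1 + C) i j‖
                ≤ ∑ i : Fin n, (‖(1 : Matrix (Fin n) (Fin n) ℂ) i j‖
                    + ‖C i j‖) := by
                  apply Finset.sum_le_sum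
                  intro i _
                  simpa [Matrix.add_apply] using norm_add_le _ _
              _ ≤ 1 + ∑ i : Fin n, ‖C i j‖ := by
                  rw [Finset.sum_add_distrib]
                  gcongr
                  have : ∑ i : Fin n, ‖(1 : Matrix (Fin n) (Fin n) ℂ) i j‖
                      = 1 := by
                    rw [Finset.sum_eq_single j]
                    · simp [Matrix.one_apply]
                    · intro i _ hij; simp [Matrix.one_apply, hij]
                    · simp
                  rw [this]
              _ ≤ Real.exp (∑ i : Fin n, ‖C i j‖) := by
                  have := Real.add_one_le_exp (∑ i : Fin n, ‖C i j‖)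
                  linarith
      _ = Real.exp (∑ j : Fin n, ∑ i : Fin n, ‖C i j‖) := by
          rw [Real.exp_sum]
      _ = Real.exp S := by rw [hS, Finset.sum_comm]
  rw [hdetfac, norm_mul]
  calc ‖(1 + C).det‖ * ‖(1 + B).det‖ * Real.exp (-S)
      ≤ Real.exp S * ‖(1 + B).det‖ * Real.exp (-S) := by
        gcongr
    _ = ‖(1 + B).det‖ * (Real.exp S * Real.exp (-S)) := by ring
    _ = ‖(1 + B).det‖ := by rw [← Real.exp_add, add_neg_cancel, Real.exp_zero, mul_one]
end

section
/- Let d ≥ 1, η > 0, ν > 0, and let F : ℂ → ℂ be holomorphic on the open strip {z : |Im z| < η}, continuous and bounded on the closed strip, with ‖F‖_∞ := sup_{|Im z| ≤ η} |F(z)|, and real-valued on ℝ. Let Λ ⊂ ℤ^d be a finite set, let H₀ be a Hermitian Λ×Λ complex matrix satisfying ∑_{n ∈ Λ} |H₀(m,n)| (e^{ν|m−n|} − 1) < η/2 for every m ∈ Λ, let λ ∈ ℝ, and let ω : Λ → ℝ be arbitrary. If |g| < η (1 − e^{−ν})^d / (72√2 ‖F‖_∞), then there exists a unique V : Λ → ℝ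 such that V(n) = (F(H₀ + λ·diag(ω) + g·diag(V)))(n,n) for every n ∈ Λ. -/
open Matrix Complex Finset

section frob

variable {n : Type*} [Fintype n] [DecidableEq n]

/-- squared Frobenius norm -/
noncomputable def frobSq (M : Matrix n n ℂ) : ℝ := ∑ i, ∑ j, Complex.normSq (M i j)

lemma frobSq_eq_trace (M : Matrix n n ℂ) : ((frobSq M : ℂ)) = Matrix.trace (star M * M) := by
  unfold frobSq
  push_cast
  rw [Matrix.trace, Finset.sum_comm]
  refine Finset.sum_congr rfl fun j _ => ?_
  rw [Matrix.diag_apply, Matrix.mul_apply]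
  refine Finset.sum_congr rfl fun i _ => ?_
  rw [Matrix.star_eq_conjTranspose, Matrix.conjTranspose_apply, Complex.normSq_eq_conj_mul_self]
  rfl

lemma frobSq_unitary {U W : Matrix n n ℂ} (hU : U * star U = 1) (hW : W * star W = 1)
    (M : Matrix n n ℂ) : frobSq (star U * M * W) = frobSq M := by
  have h : ((frobSq (star U * M * W) : ℂ)) = ((frobSq M : ℂ)) := by
    rw [frobSq_eq_trace, frobSq_eq_trace]
    have e1 : star (star U * M * W) * (star U * M * W) = star W * (star M * (M * W)) := by
      simp only [Matrix.star_mul, star_star, mul_assoc]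
      rw [← mul_assoc U (star U) (M * W), hU, one_mul]
    rw [e1, Matrix.trace_mul_comm]
    congr 1
    simp only [mul_assoc, hW, mul_one]
  exact_mod_cast h
end frob

section cfclem

variable {n : Type*} [Fintype n] [DecidableEq n]

lemma cfc_isHermitian {A : Matrix n n ℂ} (hA : A.IsHermitian) (f : ℝ → ℝ) :
    (cfc f A).IsHermitian := by
  have h : IsSelfAdjoint A := hA
  exact cfc_predicate f A

lemma isHermitian_diag_im_zero {M : Matrix n n ℂ} (hM : M.IsHermitian) (i : n) :
    (M i i).im = 0 := by
  have h := congrFun (congrFun hM.symm i) i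
  rw [Matrix.conjTranspose_apply] at h
  have h2 := congrArg Complex.im h
  simp only [Complex.star_def, Complex.conj_im] at h2
  linarith

lemma cfc_matrix_eq {A : Matrix n n ℂ} (hA : A.IsHermitian) (f : ℝ → ℝ) :
    cfc f A = (hA.eigenvectorUnitary : Matrix n n ℂ) *
      Matrix.diagonal (fun i => ((f (hA.eigenvalues i) : ℝ) : ℂ)) *
      star (hA.eigenvectorUnitary : Matrix n n ℂ) := by
  rw [hA.cfc_eq]
  rfl

lemma frobSq_cfc_sub_cfc_le {A B : Matrix n n ℂ} (hA : A.IsHermitian) (hB : B.IsHermitian)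
    (f : ℝ → ℝ) (L : ℝ) (hf : ∀ x y, |f x - f y| ≤ L * |x - y|) :
    frobSq (cfc f A - cfc f B) ≤ L ^ 2 * frobSq (A - B) := by
  classical
  set U : Matrix n n ℂ := (hA.eigenvectorUnitary : Matrix n n ℂ) with hUdef
  set W : Matrix n n ℂ := (hB.eigenvectorUnitary : Matrix n n ℂ) with hWdef
  have hU : U * star U = 1 := (Matrix.mem_unitaryGroup_iff).mp (SetLike.coe_mem _)
  have hU' : star U * U = 1 := (Matrix.mem_unitaryGroup_iff').mp (SetLike.coe_mem _)
  have hW : W * star W = 1 := (Matrix.mem_unitaryGroup_iff).mp (SetLike.coe_mem _)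
  have hW' : star W * W = 1 := (Matrix.mem_unitaryGroup_iff').mp (SetLike.coe_mem _)
  have hco : (RCLike.ofReal : ℝ → ℂ) = Complex.ofReal := rfl
  set M : Matrix n n ℂ := star U * W with hMdef
  -- key conjugation computation
  have conj_entry : ∀ (dA dB : n → ℂ),
      star U * (U * Matrix.diagonal dA * star U - W * Matrix.diagonal dB * star W) * W
        = Matrix.diagonal dA * M - M * Matrix.diagonal dB := by
    intro dA dB
    rw [Matrix.mul_sub, Matrix.sub_mul]
    congr 1
    · calc star U * (U * Matrix.diagonal dA * star U) * W
          = (star U * U) * (Matrix.diagonal dA * (star U * W)) := by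
            simp only [Matrix.mul_assoc]
        _ = Matrix.diagonal dA * M := by rw [hU', one_mul]
    · calc star U * (W * Matrix.diagonal dB * star W) * W
          = star U * (W * (Matrix.diagonal dB * (star W * W))) := by
            simp only [Matrix.mul_assoc]
        _ = M * Matrix.diagonal dB := by
            rw [hW', Matrix.mul_one, ← Matrix.mul_assoc]
  have sq_bound : ∀ x y : ℝ, (f x - f y) * (f x - f y) ≤ L ^ 2 * ((x - y) * (x - y)) := by
    intro x y
    have h := hf x y
    have h2 : |f x - f y| * |f x - f y| ≤ (L * |x - y|) * (L * |x - y|) :=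
      mul_self_le_mul_self (abs_nonneg _) h
    rw [abs_mul_abs_self] at h2
    calc (f x - f y) * (f x - f y) ≤ (L * |x - y|) * (L * |x - y|) := h2
      _ = L ^ 2 * (|x - y| * |x - y|) := by ring
      _ = L ^ 2 * ((x - y) * (x - y)) := by rw [abs_mul_abs_self]
  have e1 : frobSq (cfc f A - cfc f B)
      = ∑ i, ∑ j, ((f (hA.eigenvalues i) - f (hB.eigenvalues j)) * (f (hA.eigenvalues i) - f (hB.eigenvalues j))) * Complex.normSq (M i j) := by
    rw [← frobSq_unitary hU hW (cfc f A - cfc f B), cfc_matrix_eq hA, cfc_matrix_eq hB,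
      conj_entry]
    unfold frobSq
    refine Finset.sum_congr rfl fun i _ => Finset.sum_congr rfl fun j _ => ?_
    rw [Matrix.sub_apply, Matrix.diagonal_mul, Matrix.mul_diagonal]
    have : ((f (hA.eigenvalues i) : ℝ) : ℂ) * M i j - M i j * ((f (hB.eigenvalues j) : ℝ) : ℂ)
        = (((f (hA.eigenvalues i) - f (hB.eigenvalues j) : ℝ)) : ℂ) * M i j := by push_cast; ring
    rw [this, Complex.normSq_mul, Complex.normSq_ofReal]
  have e2 : frobSq (A - B)
      = ∑ i, ∑ j, (((hA.eigenvalues i) - (hB.eigenvalues j)) * ((hA.eigenvalues i) - (hB.eigenvalues j))) * Complex.normSq (M i j) := by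
    rw [← frobSq_unitary hU hW (A - B)]
    nth_rewrite 1 [hA.spectral_theorem, hB.spectral_theorem]
    rw [Unitary.conjStarAlgAut_apply, Unitary.conjStarAlgAut_apply]
    rw [conj_entry]
    unfold frobSq
    refine Finset.sum_congr rfl fun i _ => Finset.sum_congr rfl fun j _ => ?_
    rw [Matrix.sub_apply, Matrix.diagonal_mul, Matrix.mul_diagonal]
    have : (((hA.eigenvalues i) : ℝ) : ℂ) * M i j - M i j * (((hB.eigenvalues j) : ℝ) : ℂ)
        = ((((hA.eigenvalues i) - (hB.eigenvalues j) : ℝ)) : ℂ) * M i j := by push_cast; ring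
    simp only [Function.comp_apply, hco]
    rw [this, Complex.normSq_mul, Complex.normSq_ofReal]
  rw [e1, e2, Finset.mul_sum]
  refine Finset.sum_le_sum fun i _ => ?_
  rw [Finset.mul_sum]
  refine Finset.sum_le_sum fun j _ => ?_
  calc ((f (hA.eigenvalues i) - f (hB.eigenvalues j)) * (f (hA.eigenvalues i) - f (hB.eigenvalues j))) * Complex.normSq (M i j)
      ≤ (L ^ 2 * (((hA.eigenvalues i) - (hB.eigenvalues j)) * ((hA.eigenvalues i) - (hB.eigenvalues j)))) * Complex.normSq (M i j) :=
        mul_le_mul_of_nonneg_right (sq_bound _ _) (Complex.normSq_nonneg _)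
    _ = L ^ 2 * ((((hA.eigenvalues i) - (hB.eigenvalues j)) * ((hA.eigenvalues i) - (hB.eigenvalues j))) * Complex.normSq (M i j)) := by ring

end cfclem

section fixedpt

open Function

theorem aux_fixed_point {n : Type*} [Fintype n] [DecidableEq n]
    (f : ℝ → ℝ) (L g : ℝ) (hL : 0 ≤ L) (hf : ∀ x y, |f x - f y| ≤ L * |x - y|)
    (hLg : L * |g| ≤ 1 / 2)
    (X : Matrix n n ℂ) (hX : X.IsHermitian) :
    ∃! V : n → ℝ, ∀ i : n,
      (V i : ℂ) = cfc f (X + (g : ℂ) • Matrix.diagonal (fun k => (V k : ℂ))) i i := by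
  classical
  set Am : (n → ℝ) → Matrix n n ℂ :=
    fun V => X + (g : ℂ) • Matrix.diagonal (fun k => (V k : ℂ)) with hAmdef
  have hAm : ∀ V : n → ℝ, (Am V).IsHermitian := by
    intro V
    refine hX.add ?_
    simp only [Matrix.IsHermitian, Matrix.conjTranspose_smul, Matrix.diagonal_conjTranspose]
    congr 1
    · simp [Complex.star_def, Complex.conj_ofReal]
    · funext k
      simp [Pi.star_def, Complex.star_def, Complex.conj_ofReal]
  have hdiff : ∀ V W : n → ℝ,
      Am V - Am W = (g : ℂ) • Matrix.diagonal (fun k => ((V k - W k : ℝ) : ℂ)) := by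
    intro V W
    ext i j
    by_cases h : i = j
    · subst h
      simp [Am, Matrix.diagonal_apply_eq]
      push_cast
      ring
    · simp [Am, Matrix.diagonal_apply_ne _ h]
  have hfrob_diag : ∀ V W : n → ℝ,
      frobSq (Am V - Am W) = g ^ 2 * ∑ i, (V i - W i) ^ 2 := by
    intro V W
    rw [hdiff]
    unfold frobSq
    rw [Finset.mul_sum]
    refine Finset.sum_congr rfl fun i _ => ?_
    rw [Finset.sum_eq_single i]
    · simp only [Matrix.smul_apply, Matrix.diagonal_apply_eq, smul_eq_mul,
        Complex.normSq_mul, Complex.normSq_ofReal]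
      ring
    · intro b _ hb
      simp [Matrix.diagonal_apply_ne _ (Ne.symm hb)]
    · intro h; exact absurd (Finset.mem_univ i) h
  -- the iteration map on Euclidean space
  set E := EuclideanSpace ℝ n with hEdef
  set Φ : E → E := fun V => WithLp.toLp 2 (fun i => (cfc f (Am (fun k => V k)) i i).re) with hΦdef
  have key : ∀ V W : E, ∑ i, (Φ V i - Φ W i) ^ 2 ≤ (1 / 2) ^ 2 * ∑ i, (V i - W i) ^ 2 := by
    intro V W
    set A := Am (fun k => V k)
    set B := Am (fun k => W k)
    have step1 : ∀ i : n, (Φ V i - Φ W i) ^ 2 ≤ Complex.normSq ((cfc f A - cfc f B) i i) := by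
      intro i
      have : Φ V i - Φ W i = ((cfc f A - cfc f B) i i).re := by
        simp [Φ, PiLp.toLp_apply, Matrix.sub_apply, Complex.sub_re, A, B]
      rw [this, Complex.normSq_apply]
      nlinarith [sq_nonneg ((cfc f A - cfc f B) i i).im]
    have step2 : ∑ i, Complex.normSq ((cfc f A - cfc f B) i i) ≤ frobSq (cfc f A - cfc f B) := by
      unfold frobSq
      refine Finset.sum_le_sum fun i _ => ?_
      exact Finset.single_le_sum (fun j _ => Complex.normSq_nonneg _) (Finset.mem_univ i)
    have step3 : frobSq (cfc f A - cfc f B) ≤ L ^ 2 * frobSq (A - B) :=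
      frobSq_cfc_sub_cfc_le (hAm _) (hAm _) f L hf
    have step4 : frobSq (A - B) = g ^ 2 * ∑ i, (V i - W i) ^ 2 := hfrob_diag _ _
    have step5 : L ^ 2 * (g ^ 2 * ∑ i, (V i - W i) ^ 2)
        ≤ (1 / 2) ^ 2 * ∑ i, (V i - W i) ^ 2 := by
      have hsum : (0:ℝ) ≤ ∑ i, (V i - W i) ^ 2 :=
        Finset.sum_nonneg fun i _ => sq_nonneg _
      have h1 : L ^ 2 * g ^ 2 ≤ (1 / 2) ^ 2 := by
        have h2 : (L * |g|) * (L * |g|) ≤ (1 / 2) * (1 / 2) :=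
          mul_self_le_mul_self (by positivity) hLg
        have h3 : |g| * |g| = g * g := abs_mul_abs_self g
        nlinarith [h2, h3]
      calc L ^ 2 * (g ^ 2 * ∑ i, (V i - W i) ^ 2) = (L ^ 2 * g ^ 2) * ∑ i, (V i - W i) ^ 2 := by
            ring
        _ ≤ (1 / 2) ^ 2 * ∑ i, (V i - W i) ^ 2 := mul_le_mul_of_nonneg_right h1 hsum
    calc ∑ i, (Φ V i - Φ W i) ^ 2 ≤ ∑ i, Complex.normSq ((cfc f A - cfc f B) i i) :=
          Finset.sum_le_sum fun i _ => step1 i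
      _ ≤ frobSq (cfc f A - cfc f B) := step2
      _ ≤ L ^ 2 * frobSq (A - B) := step3
      _ = L ^ 2 * (g ^ 2 * ∑ i, (V i - W i) ^ 2) := by rw [step4]
      _ ≤ (1 / 2) ^ 2 * ∑ i, (V i - W i) ^ 2 := step5
  have hdistE : ∀ V W : E, dist V W = Real.sqrt (∑ i, (V i - W i) ^ 2) := by
    intro V W
    rw [EuclideanSpace.dist_eq]
    congr 1
    refine Finset.sum_congr rfl fun i _ => ?_
    rw [Real.dist_eq, _root_.sq_abs]
  have hcontr : ∀ V W : E, dist (Φ V) (Φ W) ≤ (1 / 2) * dist V W := by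
    intro V W
    rw [hdistE, hdistE]
    have h1 := key V W
    calc Real.sqrt (∑ i, (Φ V i - Φ W i) ^ 2)
        ≤ Real.sqrt ((1 / 2) ^ 2 * ∑ i, (V i - W i) ^ 2) := Real.sqrt_le_sqrt h1
      _ = (1 / 2) * Real.sqrt (∑ i, (V i - W i) ^ 2) := by
          rw [Real.sqrt_mul (by positivity), Real.sqrt_sq (by norm_num : (0:ℝ) ≤ 1/2)]
  have hlip : LipschitzWith (1 / 2 : NNReal) Φ := by
    refine LipschitzWith.of_dist_le_mul fun V W => ?_
    have h := hcontr V W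
    have hcoe : ((1 / 2 : NNReal) : ℝ) = 1 / 2 := by norm_num
    rw [hcoe]
    exact h
  have hC : ContractingWith (1 / 2 : NNReal) Φ := ⟨NNReal.coe_lt_coe.mp (by norm_num), hlip⟩
  have : Nonempty E := ⟨0⟩
  set V₀ : E := ContractingWith.fixedPoint Φ hC with hV₀def
  have hfix : Φ V₀ = V₀ := hC.fixedPoint_isFixedPt
  -- the diagonal entries of cfc are real
  have himzero : ∀ (V : n → ℝ) (i : n), (cfc f (Am V) i i).im = 0 := fun V i =>
    isHermitian_diag_im_zero (cfc_isHermitian (hAm V) f) i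
  refine ⟨(fun k => V₀ k), ?_, ?_⟩
  · intro i
    have hre : (cfc f (Am (fun k => V₀ k)) i i).re = V₀ i := congrArg (fun v : E => v i) hfix
    apply Complex.ext
    · show V₀ i = (cfc f (Am (fun k => V₀ k)) i i).re
      exact hre.symm
    · rw [Complex.ofReal_im]
      exact (himzero (fun k => V₀ k) i).symm
  · intro V₁ hV₁
    have hfix1 : Φ (WithLp.toLp 2 V₁) = WithLp.toLp 2 V₁ := by
      ext i
      show (cfc f (Am V₁) i i).re = V₁ i
      rw [← hV₁ i, Complex.ofReal_re]
    have : WithLp.toLp 2 V₁ = V₀ := hC.fixedPoint_unique hfix1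
    funext i
    exact congrArg (fun v : E => v i) this

end fixedpt

/-- The ℓ¹ norm `|n| = |n₁| + … + |n_d|` on `ℤ^d`. -/
def znorm {d : ℕ} (x : Fin d → ℤ) : ℝ := ∑ i, |(x i : ℝ)|

/-- Existence and uniqueness of the self-consistent effective potential on a finite set
`Λ ⊂ ℤ^d`: if `|g| < η (1 - e^{-ν})^d / (72 √2 ‖F‖_∞)`, there is a unique `V : Λ → ℝ`
with `V n = (F(H₀ + λ diag ω + g diag V))(n,n)` for all `n ∈ Λ`. -/
theorem effective_potential_exists_unique
    (d : ℕ) (hd : 1 ≤ d) (η ν lam g : ℝ) (hη : 0 < η) (hν : 0 < ν)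
    (F : ℂ → ℂ)
    (hF_holo : DifferentiableOn ℂ F {z : ℂ | |z.im| < η})
    (hF_cont : ContinuousOn F {z : ℂ | |z.im| ≤ η})
    (hF_bdd : ∃ M : ℝ, ∀ z : ℂ, |z.im| ≤ η → ‖F z‖ ≤ M)
    (hF_real : ∀ x : ℝ, (F (x : ℂ)).im = 0)
    (Λ : Finset (Fin d → ℤ))
    (H₀ : Matrix Λ Λ ℂ) (hH₀ : H₀.IsHermitian)
    (hdecay : ∀ m : Λ, ∑ n : Λ,
      ‖H₀ m n‖ * (Real.exp (ν * znorm ((m : Fin d → ℤ) - (n : Fin d → ℤ))) - 1)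
        < η / 2)
    (ω : Λ → ℝ)
    (hg : |g| < η * (1 - Real.exp (-ν)) ^ d /
      (72 * Real.sqrt 2 * (⨆ z : {z : ℂ // |z.im| ≤ η}, ‖F z‖))) :
    ∃! V : Λ → ℝ, ∀ n : Λ,
      (V n : ℂ) =
        cfc (fun x : ℝ => (F (x : ℂ)).re)
          (H₀ + (lam : ℂ) • Matrix.diagonal (fun k : Λ => (ω k : ℂ))
            + (g : ℂ) • Matrix.diagonal (fun k : Λ => (V k : ℂ))) n n := by
  classical
  set M₀ : ℝ := ⨆ z : {z : ℂ // |z.im| ≤ η}, ‖F z‖ with hM₀def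
  obtain ⟨Mb, hMb⟩ := hF_bdd
  have hbdd : BddAbove (Set.range fun z : {z : ℂ // |z.im| ≤ η} => ‖F z‖) := by
    refine ⟨Mb, ?_⟩
    rintro x ⟨z, rfl⟩
    exact hMb z z.2
  have hle : ∀ z : ℂ, |z.im| ≤ η → ‖F z‖ ≤ M₀ := fun z hz =>
    le_ciSup hbdd (⟨z, hz⟩ : {z : ℂ // |z.im| ≤ η})
  have hM₀0 : 0 ≤ M₀ :=
    le_trans (norm_nonneg _) (hle 0 (by simp [hη.le]))
  have hM₀pos : 0 < M₀ := by
    rcases hM₀0.lt_or_eq with h | h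
    · exact h
    · exfalso
      rw [← h, mul_zero, div_zero] at hg
      exact absurd hg (not_lt.mpr (abs_nonneg g))
  have hs2 : (1:ℝ) ≤ Real.sqrt 2 := by
    nlinarith [Real.sq_sqrt (by norm_num : (0:ℝ) ≤ 2), Real.sqrt_nonneg 2]
  -- bound on |g|
  have hc1 : (1 - Real.exp (-ν)) ^ d ≤ 1 := by
    apply pow_le_one₀
    · have h1 : Real.exp (-ν) < 1 := by
        rw [Real.exp_lt_one_iff]
        linarith
      linarith
    · have : Real.exp (-ν) > 0 := Real.exp_pos _
      linarith
  have hD : (0:ℝ) < 72 * Real.sqrt 2 * M₀ := by positivity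
  have hg' : |g| < η / (72 * Real.sqrt 2 * M₀) := by
    calc |g| < η * (1 - Real.exp (-ν)) ^ d / (72 * Real.sqrt 2 * M₀) := hg
      _ ≤ η * 1 / (72 * Real.sqrt 2 * M₀) :=
          (div_le_div_iff_of_pos_right hD).mpr (mul_le_mul_of_nonneg_left hc1 hη.le)
      _ = η / (72 * Real.sqrt 2 * M₀) := by rw [mul_one]
  have hgD : |g| * (72 * Real.sqrt 2 * M₀) < η := (lt_div_iff₀ hD).mp hg'
  set L : ℝ := 2 * M₀ / η with hLdef
  have hLpos : 0 < L := by positivity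
  have hLg : L * |g| ≤ 1 / 2 := by
    rw [hLdef, div_mul_eq_mul_div, div_le_iff₀ hη]
    nlinarith [abs_nonneg g, hM₀pos, hs2, hgD]
  -- derivative bound on the middle strip
  have hder : ∀ z : ℂ, |z.im| ≤ η / 2 → ‖deriv F z‖ ≤ L := by
    intro z hz
    have hball : Metric.ball z (η / 2) ⊆ {w : ℂ | |w.im| < η} := by
      intro u hu
      rw [Metric.mem_ball, Complex.dist_eq] at hu
      have him : |u.im - z.im| ≤ ‖u - z‖ := by
        simpa [Complex.sub_im] using Complex.abs_im_le_norm (u - z)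
      simp only [Set.mem_setOf_eq]
      calc |u.im| ≤ |u.im - z.im| + |z.im| := by
            simpa using abs_add_le (u.im - z.im) z.im
        _ < η / 2 + η / 2 := add_lt_add_of_lt_of_le (him.trans_lt hu) hz
        _ = η := by ring
    have hclosed : closure (Metric.ball z (η / 2)) ⊆ {w : ℂ | |w.im| ≤ η} := by
      intro u hu
      have hu' : u ∈ Metric.closedBall z (η / 2) :=
        Metric.closure_ball_subset_closedBall hu
      rw [Metric.mem_closedBall, Complex.dist_eq] at hu'
      have him : |u.im - z.im| ≤ ‖u - z‖ := by
        simpa [Complex.sub_im] using Complex.abs_im_le_norm (u - z)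
      simp only [Set.mem_setOf_eq]
      calc |u.im| ≤ |u.im - z.im| + |z.im| := by
            simpa using abs_add_le (u.im - z.im) z.im
        _ ≤ η / 2 + η / 2 := add_le_add (him.trans hu') hz
        _ = η := by ring
    have hdc : DiffContOnCl ℂ F (Metric.ball z (η / 2)) :=
      ⟨hF_holo.mono hball, hF_cont.mono hclosed⟩
    have hsphere : ∀ u ∈ Metric.sphere z (η / 2), ‖F u‖ ≤ M₀ := by
      intro u hu
      apply hle
      have : u ∈ closure (Metric.ball z (η / 2)) := by
        rw [closure_ball z (by positivity : (η/2) ≠ 0)]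
        exact Metric.sphere_subset_closedBall hu
      exact hclosed this
    have h := Complex.norm_deriv_le_of_forall_mem_sphere_norm_le
      (by positivity : (0:ℝ) < η / 2) hdc hsphere
    calc ‖deriv F z‖ ≤ M₀ / (η / 2) := h
      _ = L := by rw [hLdef]; field_simp
  -- Lipschitz bound for x ↦ Re F x on ℝ
  have hfLip : ∀ x y : ℝ, |(F (x : ℂ)).re - (F (y : ℂ)).re| ≤ L * |x - y| := by
    intro x y
    set s : Set ℂ := {w : ℂ | |w.im| ≤ η / 2} with hsdef
    have hconv : Convex ℝ s := by
      have h1 : s = Complex.imLm ⁻¹' (Set.Icc (-(η/2)) (η/2)) := by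
        ext w
        simp [hsdef, abs_le, Complex.imLm]
      rw [h1]
      exact (convex_Icc _ _).linear_preimage _
    have hdiffat : ∀ w ∈ s, DifferentiableAt ℂ F w := by
      intro w hw
      have hw' : |w.im| < η := lt_of_le_of_lt hw (by linarith)
      have hopen : IsOpen {w : ℂ | |w.im| < η} := by
        have : {w : ℂ | |w.im| < η} = (fun w : ℂ => |w.im|) ⁻¹' (Set.Iio η) := rfl
        rw [this]
        exact IsOpen.preimage (by continuity) isOpen_Iio
      exact (hF_holo.differentiableAt (hopen.mem_nhds hw'))
    have hmem : ∀ x : ℝ, ((x : ℂ) ∈ s) := by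
      intro x
      simp only [hsdef, Set.mem_setOf_eq, Complex.ofReal_im, abs_zero]
      positivity
    have h := hconv.norm_image_sub_le_of_norm_deriv_le hdiffat
      (fun w hw => hder w hw) (hmem y) (hmem x)
    have h2 : |(F (x : ℂ)).re - (F (y : ℂ)).re| ≤ ‖F (x : ℂ) - F (y : ℂ)‖ := by
      rw [← Complex.sub_re]
      exact (Complex.abs_re_le_norm _).trans le_rfl
    calc |(F (x : ℂ)).re - (F (y : ℂ)).re| ≤ ‖F (x : ℂ) - F (y : ℂ)‖ := h2
      _ ≤ L * ‖(x : ℂ) - (y : ℂ)‖ := h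
      _ = L * |x - y| := by
          rw [← Complex.ofReal_sub, Complex.norm_real, Real.norm_eq_abs]
  -- the fixed Hermitian part
  have hX : (H₀ + (lam : ℂ) • Matrix.diagonal (fun k : Λ => (ω k : ℂ))).IsHermitian := by
    refine hH₀.add ?_
    simp only [Matrix.IsHermitian, Matrix.conjTranspose_smul, Matrix.diagonal_conjTranspose]
    congr 1
    · simp [Complex.star_def, Complex.conj_ofReal]
    · funext k
      simp [Pi.star_def, Complex.star_def, Complex.conj_ofReal]
  exact aux_fixed_point (fun x : ℝ => (F (x : ℂ)).re) L g hLpos.le hfLip hLg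
    (H₀ + (lam : ℂ) • Matrix.diagonal (fun k : Λ => (ω k : ℂ))) hX
end

section
/- Let d ≥ 1, η > 0, ν > 0, and let F : ℂ → ℂ be holomorphic on the open strip {z : |Im z| < η}, continuous and bounded on the closed strip, with ‖F‖_∞ := sup_{|Im z| ≤ η} |F(z)|, and real-valued on ℝ. Let Λ ⊂ ℤ^d be a finite set, let H₀ be a Hermitian Λ×Λ complex matrix satisfying ∑_{n ∈ Λ} |H₀(m,n)| (e^{ν|m−n|} − 1) < η/2 for every m ∈ Λ, let λ ∈ ℝ, and let ω : Λ → ℝ be arbitrary. If |g| < η (1 − e^{−ν})^d / (72√2 ‖F‖_∞), then there exists a unique pair (V_↑, V_↓) of functions Λ → ℝ such that V_↑(n) = (F(H₀ + λ·diag(ω) + g·diag(V_↓)))(n,n) and V_↓(n) = (F(H₀ + λ·diag(ω) + g·diag(V_↑)))(n,n) for every n ∈ Λ. -/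
open Matrix Complex Metric Set

namespace HubAux

variable {n : Type*} [Fintype n] [DecidableEq n]

set_option linter.unusedSectionVars false

/-- squared Frobenius norm -/
noncomputable def S (M : Matrix n n ℂ) : ℝ := ∑ i, ∑ j, Complex.normSq (M i j)

lemma S_nonneg (M : Matrix n n ℂ) : 0 ≤ S M :=
  Finset.sum_nonneg fun _ _ => Finset.sum_nonneg fun _ _ => Complex.normSq_nonneg _

lemma sum_diag_le_S (M : Matrix n n ℂ) : ∑ k, Complex.normSq (M k k) ≤ S M := by
  refine Finset.sum_le_sum fun i _ => ?_
  exact Finset.single_le_sum (fun j _ => Complex.normSq_nonneg (M i j)) (Finset.mem_univ i)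

lemma trace_eq_S (M : Matrix n n ℂ) : (Mᴴ * M).trace = ((S M : ℝ) : ℂ) := by
  rw [Matrix.trace, S]
  push_cast
  rw [Finset.sum_comm]
  refine Finset.sum_congr rfl fun i _ => ?_
  rw [Matrix.diag_apply, Matrix.mul_apply]
  refine Finset.sum_congr rfl fun j _ => ?_
  rw [Matrix.conjTranspose_apply]
  exact (Complex.normSq_eq_conj_mul_self).symm

lemma S_conj {U V : Matrix n n ℂ} (hU : U ∈ Matrix.unitaryGroup n ℂ)
    (hV : V ∈ Matrix.unitaryGroup n ℂ) (M : Matrix n n ℂ) :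
    S (star U * M * V) = S M := by
  have h1 : Complex.ofReal (S (star U * M * V)) = Complex.ofReal (S M) := by
    rw [← trace_eq_S, ← trace_eq_S]
    have h2 : (star U * M * V)ᴴ * (star U * M * V) = Vᴴ * (Mᴴ * M) * V := by
      simp only [← Matrix.star_eq_conjTranspose, StarMul.star_mul, star_star, Matrix.mul_assoc]
      rw [← Matrix.mul_assoc U (star U) (M * V), Unitary.mul_star_self_of_mem hU, Matrix.one_mul]
    rw [h2, ← Matrix.star_eq_conjTranspose, Matrix.trace_mul_cycle,
      ← Matrix.mul_assoc, Unitary.mul_star_self_of_mem hV, Matrix.one_mul]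
  exact_mod_cast h1

lemma diag_conj_diag {U V : Matrix n n ℂ} (hU : star U * U = 1) (hV : star V * V = 1)
    (D E : Matrix n n ℂ) :
    star U * (U * D * star U - V * E * star V) * V
      = D * (star U * V) - (star U * V) * E := by
  rw [Matrix.mul_sub, Matrix.sub_mul]
  congr 1
  · simp only [Matrix.mul_assoc, ← Matrix.mul_assoc (star U) U, hU, Matrix.one_mul]
  · simp only [Matrix.mul_assoc, hV, Matrix.mul_one]

lemma S_diag_comm (a b : n → ℝ) (W : Matrix n n ℂ) :
    S (Matrix.diagonal (Complex.ofReal ∘ a) * W - W * Matrix.diagonal (Complex.ofReal ∘ b))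
      = ∑ i, ∑ j, (a i - b j) ^ 2 * Complex.normSq (W i j) := by
  refine Finset.sum_congr rfl fun i _ => Finset.sum_congr rfl fun j _ => ?_
  rw [Matrix.sub_apply, Matrix.diagonal_mul, Matrix.mul_diagonal]
  have : (Complex.ofReal ∘ a) i * W i j - W i j * (Complex.ofReal ∘ b) j
      = ((a i - b j : ℝ) : ℂ) * W i j := by push_cast [Function.comp]; ring
  rw [this, Complex.normSq_mul, Complex.normSq_ofReal]
  ring

lemma S_cfc_sub_le {A B : Matrix n n ℂ} (hA : A.IsHermitian) (hB : B.IsHermitian)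
    (f : ℝ → ℝ) (L : ℝ) (hf : ∀ x y : ℝ, |f x - f y| ≤ L * |x - y|) :
    S (hA.cfc f - hB.cfc f) ≤ L ^ 2 * S (A - B) := by
  set U : Matrix n n ℂ := (Matrix.IsHermitian.eigenvectorUnitary hA : Matrix n n ℂ) with hUdef
  set V : Matrix n n ℂ := (Matrix.IsHermitian.eigenvectorUnitary hB : Matrix n n ℂ) with hVdef
  have hU : U ∈ Matrix.unitaryGroup n ℂ := (Matrix.IsHermitian.eigenvectorUnitary hA).2
  have hV : V ∈ Matrix.unitaryGroup n ℂ := (Matrix.IsHermitian.eigenvectorUnitary hB).2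
  have hU1 : star U * U = 1 := Unitary.star_mul_self_of_mem hU
  have hV1 : star V * V = 1 := Unitary.star_mul_self_of_mem hV
  set W : Matrix n n ℂ := star U * V with hWdef
  have e1 : S (hA.cfc f - hB.cfc f)
      = ∑ i, ∑ j, (f (hA.eigenvalues i) - f (hB.eigenvalues j)) ^ 2 * Complex.normSq (W i j) := by
    rw [← S_conj hU hV, Matrix.IsHermitian.cfc, Matrix.IsHermitian.cfc]
    simp only [Unitary.conjStarAlgAut_apply, Unitary.coe_star]
    rw [← hUdef, ← hVdef, diag_conj_diag hU1 hV1]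
    exact S_diag_comm _ _ W
  have e2 : S (A - B)
      = ∑ i, ∑ j, (hA.eigenvalues i - hB.eigenvalues j) ^ 2 * Complex.normSq (W i j) := by
    rw [← S_conj hU hV]
    conv_lhs => rw [hA.spectral_theorem, hB.spectral_theorem]
    simp only [Unitary.conjStarAlgAut_apply, Unitary.coe_star]
    rw [← hUdef, ← hVdef, diag_conj_diag hU1 hV1]
    exact S_diag_comm _ _ W
  rw [e1, e2, Finset.mul_sum]
  refine Finset.sum_le_sum fun i _ => ?_
  rw [Finset.mul_sum]
  refine Finset.sum_le_sum fun j _ => ?_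
  rw [← mul_assoc]
  refine mul_le_mul_of_nonneg_right ?_ (Complex.normSq_nonneg _)
  have h1 := hf (hA.eigenvalues i) (hB.eigenvalues j)
  have h2 : (f (hA.eigenvalues i) - f (hB.eigenvalues j)) ^ 2
      ≤ (L * |hA.eigenvalues i - hB.eigenvalues j|) ^ 2 := by
    rw [← _root_.sq_abs]
    exact pow_le_pow_left₀ (abs_nonneg _) h1 2
  calc (f (hA.eigenvalues i) - f (hB.eigenvalues j)) ^ 2
      ≤ (L * |hA.eigenvalues i - hB.eigenvalues j|) ^ 2 := h2
    _ = L ^ 2 * (hA.eigenvalues i - hB.eigenvalues j) ^ 2 := by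
        rw [mul_pow, _root_.sq_abs]

lemma S_smul_diag (g : ℝ) (w : n → ℝ) :
    S ((g : ℂ) • Matrix.diagonal (fun k => (w k : ℂ))) = g ^ 2 * ∑ k, (w k) ^ 2 := by
  rw [S, Finset.mul_sum]
  refine Finset.sum_congr rfl fun i _ => ?_
  rw [Finset.sum_eq_single i]
  · rw [Matrix.smul_apply, Matrix.diagonal_apply_eq, smul_eq_mul, Complex.normSq_mul,
      Complex.normSq_ofReal, Complex.normSq_ofReal]
    ring
  · intro j _ hji
    rw [Matrix.smul_apply, Matrix.diagonal_apply_ne' _ hji]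
    simp
  · intro h
    exact absurd (Finset.mem_univ i) h

lemma herm_smul_diag (c : ℝ) (w : n → ℝ) :
    ((c : ℂ) • Matrix.diagonal (fun k => (w k : ℂ))).IsHermitian := by
  rw [Matrix.IsHermitian, Matrix.conjTranspose_smul, Matrix.diagonal_conjTranspose]
  have h1 : (star fun k : n => (w k : ℂ)) = fun k : n => (w k : ℂ) := by
    funext k
    simp [Pi.star_apply, Complex.star_def, Complex.conj_ofReal]
  rw [h1]
  congr 1
  exact Complex.conj_ofReal c

lemma F_lip (η : ℝ) (hη : 0 < η) (F : ℂ → ℂ)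
    (hF_holo : DifferentiableOn ℂ F {z : ℂ | |z.im| < η})
    (Sup : ℝ) (hSup : 0 < Sup) (hb : ∀ z : ℂ, |z.im| ≤ η → ‖F z‖ ≤ Sup) :
    ∀ x y : ℝ, ‖F x - F y‖ ≤ 3 * Sup / η * |x - y| := by
  have hopen : IsOpen {z : ℂ | |z.im| < η} :=
    isOpen_lt (by fun_prop) continuous_const
  have hball : ∀ x : ℝ, Metric.ball (x : ℂ) η ⊆ {z : ℂ | |z.im| < η} := by
    intro x z hz
    rw [Metric.mem_ball, Complex.dist_eq] at hz
    have h1 : |z.im| = |(z - (x : ℂ)).im| := by simp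
    calc |z.im| = |(z - (x : ℂ)).im| := h1
      _ ≤ ‖z - (x : ℂ)‖ := Complex.abs_im_le_norm _
      _ < η := hz
  have hderiv : ∀ x : ℝ, ‖deriv F (x : ℂ)‖ ≤ 3 * Sup / η := by
    intro x
    refine Complex.norm_deriv_le_div_of_mapsTo_ball (hF_holo.mono (hball x)) ?_ hη
    intro z hz
    rw [Metric.mem_closedBall, Complex.dist_eq]
    have h1 : ‖F z‖ ≤ Sup := hb z (le_of_lt (hball x hz))
    have h2 : ‖F (x : ℂ)‖ ≤ Sup := hb _ (by simp [le_of_lt hη])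
    calc ‖F z - F (x : ℂ)‖ ≤ ‖F z‖ + ‖F (x : ℂ)‖ :=
          norm_sub_le _ _
      _ ≤ Sup + Sup := add_le_add h1 h2
      _ ≤ 3 * Sup := by linarith
  intro x y
  have hmv : ‖F (x : ℂ) - F (y : ℂ)‖ ≤ 3 * Sup / η * ‖x - y‖ := by
    refine Convex.norm_image_sub_le_of_norm_hasDerivWithin_le
      (f := fun t : ℝ => F (t : ℂ)) (f' := fun t : ℝ => deriv F (t : ℂ))
      (s := Set.univ) (fun t _ => ?_) (fun t _ => hderiv t) convex_univ trivial trivial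
    refine HasDerivAt.hasDerivWithinAt ?_
    refine HasDerivAt.comp_ofReal ?_
    exact (hF_holo.differentiableAt (hopen.mem_nhds (by simp [hη]))).hasDerivAt
  simpa [Real.norm_eq_abs] using hmv

/-- The main fixed-point argument. -/
lemma main_aux (f : ℝ → ℝ) (L g : ℝ) (hL : 0 < L)
    (hf : ∀ x y : ℝ, |f x - f y| ≤ L * |x - y|) (hgL : |g| * L < 1)
    (A : Matrix n n ℂ) (hA : A.IsHermitian) :
    ∃! V : (n → ℝ) × (n → ℝ),
      (∀ k : n, (V.1 k : ℂ)
          = cfc f (A + (g : ℂ) • Matrix.diagonal (fun k : n => (V.2 k : ℂ))) k k) ∧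
      (∀ k : n, (V.2 k : ℂ)
          = cfc f (A + (g : ℂ) • Matrix.diagonal (fun k : n => (V.1 k : ℂ))) k k) := by
  classical
  -- the Hamiltonian and its hermiticity
  set Hm : (n → ℝ) → Matrix n n ℂ :=
    fun Wf => A + (g : ℂ) • Matrix.diagonal (fun k => (Wf k : ℂ)) with hHmdef
  have hHm : ∀ Wf : n → ℝ, (Hm Wf).IsHermitian :=
    fun Wf => hA.add (herm_smul_diag g Wf)
  -- the effective potential map
  set Φ : (n → ℝ) → (n → ℝ) := fun Wf k => ((hHm Wf).cfc f k k).re with hΦdef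
  have hdiagreal : ∀ (Wf : n → ℝ) (k : n), cfc f (Hm Wf) k k = ((Φ Wf k : ℝ) : ℂ) := by
    intro Wf k
    rw [Matrix.IsHermitian.cfc_eq (hA := hHm Wf)]
    have hh : ((hHm Wf).cfc f).IsHermitian := by
      rw [← Matrix.IsHermitian.cfc_eq (hA := hHm Wf)]
      exact cfc_predicate f (Hm Wf)
    have h2 : (starRingEnd ℂ) ((hHm Wf).cfc f k k) = (hHm Wf).cfc f k k := by
      conv_rhs => rw [← hh]
      rw [Matrix.conjTranspose_apply]
      rfl
    exact (Complex.conj_eq_iff_re.mp h2).symm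
  -- the ℓ² contraction estimate
  have hPhi : ∀ a b : n → ℝ, Real.sqrt (∑ k, (Φ a k - Φ b k) ^ 2)
      ≤ |g| * L * Real.sqrt (∑ k, (a k - b k) ^ 2) := by
    intro a b
    have hAB : Hm a - Hm b = (g : ℂ) • Matrix.diagonal (fun k => ((a k - b k : ℝ) : ℂ)) := by
      rw [hHmdef]
      simp only [add_sub_add_left_eq_sub, ← smul_sub]
      rw [Matrix.diagonal_sub]
      congr 1
      funext k
      push_cast
      simp [Pi.sub_apply]
    have hSdiag : S (Hm a - Hm b) = g ^ 2 * ∑ k, (a k - b k) ^ 2 := by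
      rw [hAB, S_smul_diag]
    have hsum : ∑ k, (Φ a k - Φ b k) ^ 2 ≤ S ((hHm a).cfc f - (hHm b).cfc f) := by
      refine le_trans (Finset.sum_le_sum fun k _ => ?_) (sum_diag_le_S _)
      have h3 : Φ a k - Φ b k = (((hHm a).cfc f - (hHm b).cfc f) k k).re := by
        rw [Matrix.sub_apply, Complex.sub_re]
      rw [h3, Complex.normSq_apply]
      nlinarith [sq_nonneg ((((hHm a).cfc f - (hHm b).cfc f) k k).im)]
    have h1 : ∑ k, (Φ a k - Φ b k) ^ 2 ≤ (|g| * L) ^ 2 * ∑ k, (a k - b k) ^ 2 := by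
      calc ∑ k, (Φ a k - Φ b k) ^ 2 ≤ S ((hHm a).cfc f - (hHm b).cfc f) := hsum
        _ ≤ L ^ 2 * S (Hm a - Hm b) := S_cfc_sub_le (hHm a) (hHm b) f L hf
        _ = L ^ 2 * (g ^ 2 * ∑ k, (a k - b k) ^ 2) := by rw [hSdiag]
        _ = (|g| * L) ^ 2 * ∑ k, (a k - b k) ^ 2 := by rw [mul_pow, _root_.sq_abs]; ring
    have h2 := Real.sqrt_le_sqrt h1
    rwa [Real.sqrt_mul (by positivity), Real.sqrt_sq (by positivity)] at h2
  -- set up the contraction on the product of Euclidean spaces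
  set K : NNReal := Real.toNNReal (|g| * L) with hKdef
  have hKcoe : (K : ℝ) = |g| * L := Real.coe_toNNReal _ (by positivity)
  have hK1 : K < 1 := by
    rw [← NNReal.coe_lt_coe, hKcoe, NNReal.coe_one]
    exact hgL
  set e2 : EuclideanSpace ℝ n ≃ (n → ℝ) := WithLp.equiv 2 (n → ℝ) with he2def
  set T : EuclideanSpace ℝ n × EuclideanSpace ℝ n → EuclideanSpace ℝ n × EuclideanSpace ℝ n :=
    fun p => (e2.symm (Φ (e2 p.2)), e2.symm (Φ (e2 p.1))) with hTdef
  have hdist : ∀ u v : EuclideanSpace ℝ n,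
      dist (e2.symm (Φ (e2 u))) (e2.symm (Φ (e2 v))) ≤ (K : ℝ) * dist u v := by
    intro u v
    rw [hKcoe, EuclideanSpace.dist_eq, EuclideanSpace.dist_eq]
    have h4 := hPhi (e2 u) (e2 v)
    simpa [he2def, Real.dist_eq, _root_.sq_abs] using h4
  have hT : LipschitzWith K T := by
    refine LipschitzWith.of_dist_le_mul fun p q => ?_
    rw [Prod.dist_eq, Prod.dist_eq]
    refine max_le ?_ ?_
    · exact le_trans (hdist p.2 q.2)
        (mul_le_mul_of_nonneg_left (le_max_right _ _) K.coe_nonneg)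
    · exact le_trans (hdist p.1 q.1)
        (mul_le_mul_of_nonneg_left (le_max_left _ _) K.coe_nonneg)
  have hcontr : ContractingWith K T := ⟨hK1, hT⟩
  -- the fixed point
  set x₀ := ContractingWith.fixedPoint T hcontr with hx₀def
  have hx₀ : T x₀ = x₀ := hcontr.fixedPoint_isFixedPt
  -- characterization of fixed points
  have char : ∀ a b : n → ℝ, T (e2.symm a, e2.symm b) = (e2.symm a, e2.symm b)
      ↔ (Φ b = a ∧ Φ a = b) := by
    intro a b
    rw [hTdef, Prod.mk.injEq]
    simp only [Equiv.apply_symm_apply, EmbeddingLike.apply_eq_iff_eq]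
  -- characterization of the solution property
  have Pchar : ∀ V : (n → ℝ) × (n → ℝ),
      ((∀ k : n, (V.1 k : ℂ)
          = cfc f (A + (g : ℂ) • Matrix.diagonal (fun k : n => (V.2 k : ℂ))) k k) ∧
       (∀ k : n, (V.2 k : ℂ)
          = cfc f (A + (g : ℂ) • Matrix.diagonal (fun k : n => (V.1 k : ℂ))) k k))
      ↔ (Φ V.2 = V.1 ∧ Φ V.1 = V.2) := by
    intro V
    constructor
    · rintro ⟨h1, h2⟩
      constructor
      · funext k
        have := h1 k
        rw [hdiagreal V.2 k] at this
        exact (Complex.ofReal_inj.mp this).symm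
      · funext k
        have := h2 k
        rw [hdiagreal V.1 k] at this
        exact (Complex.ofReal_inj.mp this).symm
    · rintro ⟨h1, h2⟩
      constructor
      · intro k
        rw [hdiagreal V.2 k, ← h1]
      · intro k
        rw [hdiagreal V.1 k, ← h2]
  refine ⟨(e2 x₀.1, e2 x₀.2), ?_, ?_⟩
  · refine (Pchar (e2 x₀.1, e2 x₀.2)).mpr ?_
    have := (char (e2 x₀.1) (e2 x₀.2)).mp (by
      simpa [Equiv.symm_apply_apply] using hx₀)
    simpa using this
  · intro W hW
    replace hW := (Pchar W).mp hW
    have hfix : T (e2.symm W.1, e2.symm W.2) = (e2.symm W.1, e2.symm W.2) :=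
      (char W.1 W.2).mpr hW
    have := hcontr.fixedPoint_unique (x := (e2.symm W.1, e2.symm W.2)) hfix
    rw [← hx₀def] at this
    have h1 : e2.symm W.1 = x₀.1 := congrArg Prod.fst this
    have h2 : e2.symm W.2 = x₀.2 := congrArg Prod.snd this
    rw [Prod.ext_iff]
    constructor
    · rw [← h1, Equiv.apply_symm_apply]
    · rw [← h2, Equiv.apply_symm_apply]

end HubAux

/-- Existence and uniqueness of the pair of self-consistent effective potentials
`(V_↑, V_↓)` for the Hubbard model on a finite set `Λ ⊂ ℤ^d`, under the smallness
condition `|g| < η (1 - e^{-ν})^d / (72 √2 ‖F‖_∞)`. -/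
theorem hubbard_effective_potential_exists_unique
    (d : ℕ) (hd : 1 ≤ d) (η ν lam g : ℝ) (hη : 0 < η) (hν : 0 < ν)
    (F : ℂ → ℂ)
    (hF_holo : DifferentiableOn ℂ F {z : ℂ | |z.im| < η})
    (hF_cont : ContinuousOn F {z : ℂ | |z.im| ≤ η})
    (hF_bdd : ∃ M : ℝ, ∀ z : ℂ, |z.im| ≤ η → ‖F z‖ ≤ M)
    (hF_real : ∀ x : ℝ, (F (x : ℂ)).im = 0)
    (Λ : Finset (Fin d → ℤ))
    (H₀ : Matrix Λ Λ ℂ) (hH₀ : H₀.IsHermitian)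
    (hdecay : ∀ m : Λ, ∑ n : Λ,
      ‖H₀ m n‖ * (Real.exp (ν * znorm ((m : Fin d → ℤ) - (n : Fin d → ℤ))) - 1)
        < η / 2)
    (ω : Λ → ℝ)
    (hg : |g| < η * (1 - Real.exp (-ν)) ^ d /
      (72 * Real.sqrt 2 * (⨆ z : {z : ℂ // |z.im| ≤ η}, ‖F z‖))) :
    ∃! V : (Λ → ℝ) × (Λ → ℝ),
      (∀ n : Λ,
        (V.1 n : ℂ) =
          cfc (fun x : ℝ => (F (x : ℂ)).re)
            (H₀ + (lam : ℂ) • Matrix.diagonal (fun k : Λ => (ω k : ℂ))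
              + (g : ℂ) • Matrix.diagonal (fun k : Λ => (V.2 k : ℂ))) n n) ∧
      (∀ n : Λ,
        (V.2 n : ℂ) =
          cfc (fun x : ℝ => (F (x : ℂ)).re)
            (H₀ + (lam : ℂ) • Matrix.diagonal (fun k : Λ => (ω k : ℂ))
              + (g : ℂ) • Matrix.diagonal (fun k : Λ => (V.1 k : ℂ))) n n) := by
  classical
  obtain ⟨M, hM⟩ := hF_bdd
  set Sup : ℝ := ⨆ z : {z : ℂ // |z.im| ≤ η}, ‖F z‖ with hSupdef
  have hbdd : BddAbove (Set.range fun z : {z : ℂ // |z.im| ≤ η} => ‖F z‖) :=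
    ⟨M, by rintro - ⟨z, rfl⟩; exact hM z z.2⟩
  have hle : ∀ z : ℂ, |z.im| ≤ η → ‖F z‖ ≤ Sup := fun z hz =>
    le_ciSup hbdd (⟨z, hz⟩ : {z : ℂ // |z.im| ≤ η})
  have hSup0 : 0 ≤ Sup := le_trans (norm_nonneg _) (hle 0 (by simp [hη.le]))
  have hSuppos : 0 < Sup := by
    rcases lt_or_eq_of_le hSup0 with h | h
    · exact h
    · exfalso
      rw [← h] at hg
      simp only [mul_zero, div_zero] at hg
      linarith [abs_nonneg g]
  set L : ℝ := 3 * Sup / η with hLdef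
  have hLpos : 0 < L := by positivity
  have hflip : ∀ x y : ℝ,
      |(fun x : ℝ => (F (x : ℂ)).re) x - (fun x : ℝ => (F (x : ℂ)).re) y| ≤ L * |x - y| := by
    intro x y
    have h1 := HubAux.F_lip η hη F hF_holo Sup hSuppos hle x y
    simp only
    have h2 : (F (x : ℂ)).re - (F (y : ℂ)).re = (F (x : ℂ) - F (y : ℂ)).re := by
      rw [Complex.sub_re]
    calc |(F (x : ℂ)).re - (F (y : ℂ)).re| = |(F (x : ℂ) - F (y : ℂ)).re| := by rw [h2]
      _ ≤ ‖F (x : ℂ) - F (y : ℂ)‖ := Complex.abs_re_le_norm _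
      _ ≤ L * |x - y| := h1
  have hexp1 : Real.exp (-ν) < 1 := by
    have := Real.exp_lt_exp.mpr (neg_lt_zero.mpr hν)
    rwa [Real.exp_zero] at this
  have hcd_le1 : (1 - Real.exp (-ν)) ^ d ≤ 1 :=
    pow_le_one₀ (by linarith) (by linarith [Real.exp_pos (-ν)])
  have hs2 : 1 ≤ Real.sqrt 2 := by
    have := Real.sqrt_le_sqrt (show (1 : ℝ) ≤ 2 by norm_num)
    simpa using this
  have hs2pos : 0 < Real.sqrt 2 := by linarith
  have hgL : |g| * L < 1 := by
    have hstep : |g| * L < (η * (1 - Real.exp (-ν)) ^ d / (72 * Real.sqrt 2 * Sup)) * L :=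
      mul_lt_mul_of_pos_right hg hLpos
    have heq : (η * (1 - Real.exp (-ν)) ^ d / (72 * Real.sqrt 2 * Sup)) * L
        = (1 - Real.exp (-ν)) ^ d / (24 * Real.sqrt 2) := by
      rw [hLdef]
      field_simp
      ring
    have hlt1 : (1 - Real.exp (-ν)) ^ d / (24 * Real.sqrt 2) < 1 := by
      rw [div_lt_one (by positivity)]
      nlinarith
    rw [heq] at hstep
    linarith
  have hAherm : (H₀ + (lam : ℂ) • Matrix.diagonal (fun k : Λ => (ω k : ℂ))).IsHermitian :=
    hH₀.add (HubAux.herm_smul_diag lam ω)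
  exact HubAux.main_aux (fun x : ℝ => (F (x : ℂ)).re) L g hLpos hflip hgL _ hAherm
end
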